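/- Let d ∈ ℕ*, α ∈ (0,2), and j ∈ ℝ with 0 < 2j < min(α,1). Then there exists a constant C > 0 such that for all x ∈ ℝ^d, ∫_{ℝ^d} (⟨y⟩^j − ⟨x⟩^j)² / |y−x|^{d+α} dy ≤ C ⟨x⟩^{2j−α}. -/

import Mathlib

open MeasureTheory

/-- Japanese bracket `⟨x⟩ = (1+|x|²)^{1/2}`. -/
noncomputable def jb {d : ℕ} (x : EuclideanSpace ℝ (Fin d)) : ℝ := Real.sqrt (1 + ‖x‖ ^ 2)

open Set Metric Module Real intervalIntegral
open scoped ENNReal NNReal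


lemma sqrt_lip_aux {s t : ℝ} (hs : 0 ≤ s) (ht : 0 ≤ t) (hst : t ≤ s) :
    Real.sqrt (1 + s ^ 2) - Real.sqrt (1 + t ^ 2) ≤ s - t := by
  have h1 : Real.sqrt (1 + s ^ 2) ≤ Real.sqrt (1 + t ^ 2) + (s - t) := by
    have ht2 : t ≤ Real.sqrt (1 + t ^ 2) := by
      calc t = Real.sqrt (t ^ 2) := (Real.sqrt_sq ht).symm
        _ ≤ Real.sqrt (1 + t ^ 2) := Real.sqrt_le_sqrt (by linarith)
    have h2 : (1 + s ^ 2) ≤ (Real.sqrt (1 + t ^ 2) + (s - t)) ^ 2 := by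
      have hsq : Real.sqrt (1 + t ^ 2) ^ 2 = 1 + t ^ 2 := Real.sq_sqrt (by positivity)
      nlinarith [Real.sqrt_nonneg (1 + t ^ 2)]
    calc Real.sqrt (1 + s ^ 2) ≤ Real.sqrt ((Real.sqrt (1 + t ^ 2) + (s - t)) ^ 2) :=
          Real.sqrt_le_sqrt h2
      _ = Real.sqrt (1 + t ^ 2) + (s - t) := by
          rw [Real.sqrt_sq (by nlinarith [Real.sqrt_nonneg (1 + t ^ 2)])]
  linarith

lemma sqrt_lip {s t : ℝ} (hs : 0 ≤ s) (ht : 0 ≤ t) :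
    |Real.sqrt (1 + s ^ 2) - Real.sqrt (1 + t ^ 2)| ≤ |s - t| := by
  rcases le_total t s with h | h
  · rw [abs_of_nonneg (sub_nonneg.2 (Real.sqrt_le_sqrt (by nlinarith))),
      abs_of_nonneg (by linarith)]
    exact sqrt_lip_aux hs ht h
  · rw [abs_sub_comm, abs_sub_comm s t,
      abs_of_nonneg (sub_nonneg.2 (Real.sqrt_le_sqrt (by nlinarith))),
      abs_of_nonneg (by linarith)]
    exact sqrt_lip_aux ht hs h

lemma rpow_concave_tangent {p q e : ℝ} (hp : 0 < p) (hpq : p ≤ q) (he0 : 0 ≤ e) (he1 : e ≤ 1) :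
    q ^ e - p ^ e ≤ p ^ (e - 1) * (q - p) := by
  have hq : 0 < q := lt_of_lt_of_le hp hpq
  have hqp : 1 ≤ q / p := (one_le_div hp).2 hpq
  have key : (q / p) ^ e ≤ 1 + e * (q / p - 1) := by
    have := rpow_one_add_le_one_add_mul_self (s := q / p - 1) (by linarith) he0 he1
    simpa using this
  have h2 : q ^ e = p ^ e * (q / p) ^ e := by
    rw [← Real.mul_rpow hp.le (by positivity), mul_div_cancel₀ _ hp.ne']
  have h3 : p ^ e * (q / p - 1) = p ^ (e - 1) * (q - p) := by
    rw [Real.rpow_sub hp, Real.rpow_one]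
    field_simp
  have h4 : e * (q / p - 1) ≤ q / p - 1 := by
    nlinarith [sub_nonneg.2 hqp]
  calc q ^ e - p ^ e = p ^ e * ((q / p) ^ e - 1) := by rw [h2]; ring
    _ ≤ p ^ e * (e * (q / p - 1)) :=
        mul_le_mul_of_nonneg_left (by linarith) (Real.rpow_nonneg hp.le e)
    _ ≤ p ^ e * (q / p - 1) :=
        mul_le_mul_of_nonneg_left h4 (Real.rpow_nonneg hp.le e)
    _ = p ^ (e - 1) * (q - p) := h3

lemma rpow_subadd {u v e : ℝ} (hu : 0 ≤ u) (hv : 0 ≤ v) (he0 : 0 ≤ e) (he1 : e ≤ 1) :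
    (u + v) ^ e ≤ u ^ e + v ^ e := by
  have h := NNReal.rpow_add_le_add_rpow (u.toNNReal) (v.toNNReal) he0 he1
  have h1 : ((u.toNNReal + v.toNNReal : ℝ≥0) : ℝ) = u + v := by
    push_cast [Real.coe_toNNReal _ hu, Real.coe_toNNReal _ hv]; ring
  calc (u + v) ^ e = (((u.toNNReal + v.toNNReal) ^ e : ℝ≥0) : ℝ) := by
        rw [NNReal.coe_rpow, h1]
    _ ≤ ((u.toNNReal ^ e + v.toNNReal ^ e : ℝ≥0) : ℝ) := NNReal.coe_le_coe.2 h
    _ = u ^ e + v ^ e := by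
        push_cast [NNReal.coe_rpow, Real.coe_toNNReal _ hu, Real.coe_toNNReal _ hv]; ring

lemma jb_one_le {d : ℕ} (x : EuclideanSpace ℝ (Fin d)) : 1 ≤ jb x := by
  have h := Real.sqrt_le_sqrt (show (1:ℝ) ≤ 1 + ‖x‖ ^ 2 by nlinarith [sq_nonneg ‖x‖])
  rwa [Real.sqrt_one] at h

lemma jb_lip {d : ℕ} (x y : EuclideanSpace ℝ (Fin d)) : |jb y - jb x| ≤ ‖y - x‖ :=
  (sqrt_lip (norm_nonneg y) (norm_nonneg x)).trans
    ((abs_norm_sub_norm_le y x).trans (le_refl _))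

lemma pointwise_bound {d : ℕ} {α j : ℝ} (hα1 : 0 < α) (hα2 : α < 2) (hj1 : 0 < j)
    (hj2 : 2 * j < α) (hj3 : 2 * j < 1) (x y : EuclideanSpace ℝ (Fin d)) :
    (jb y ^ j - jb x ^ j) ^ 2 / ‖y - x‖ ^ ((d : ℝ) + α) ≤
      (if ‖y - x‖ ≤ jb x / 2 then
        4 * jb x ^ (2 * j - 2) * ‖y - x‖ ^ (2 - ((d : ℝ) + α))
      else
        4 * jb x ^ (2 * j) * ‖y - x‖ ^ (-((d : ℝ) + α)) +
          2 * ‖y - x‖ ^ (2 * j - ((d : ℝ) + α))) := by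
  set a := jb x with ha_def
  set b := jb y with hb_def
  set r := ‖y - x‖ with hr_def
  set s := (d : ℝ) + α with hs_def
  have ha : 1 ≤ a := jb_one_le x
  have hb : 1 ≤ b := jb_one_le y
  have ha0 : 0 < a := by linarith
  have hb0 : 0 < b := by linarith
  have hr0 : 0 ≤ r := norm_nonneg _
  have hlip : |b - a| ≤ r := jb_lip x y
  have hj1' : j ≤ 1 := by linarith
  split_ifs with hcase
  · -- near region
    rcases eq_or_lt_of_le hr0 with hr | hr
    · -- r = 0
      have hba : b = a := by
        have := abs_nonneg (b - a)
        have h0 : |b - a| = 0 := le_antisymm (by rw [hr]; exact hlip) this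
        have := abs_eq_zero.1 h0
        linarith [sub_eq_zero.1 this]
      rw [hba, sub_self]
      have : (0:ℝ) ^ 2 / r ^ s = 0 := by simp
      rw [this]
      positivity
    · -- 0 < r
      have hrs : 0 < r ^ s := Real.rpow_pos_of_pos hr s
      have hb_half : a / 2 ≤ b := by
        have := abs_le.1 hlip
        have : a - r ≤ b := by linarith [this.1]
        linarith [hcase]
      have key : |b ^ j - a ^ j| ≤ 2 * a ^ (j - 1) * r := by
        have haj1 : 0 ≤ a ^ (j - 1) := Real.rpow_nonneg ha0.le _
        rcases le_total a b with hab | hab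
        · have h1 : b ^ j - a ^ j ≤ a ^ (j - 1) * (b - a) :=
            rpow_concave_tangent ha0 hab hj1.le hj1'
          have h2 : a ^ j ≤ b ^ j := Real.rpow_le_rpow ha0.le hab hj1.le
          rw [abs_of_nonneg (by linarith)]
          have hba_r : b - a ≤ r := by linarith [(abs_le.1 hlip).2]
          nlinarith
        · have h1 : a ^ j - b ^ j ≤ b ^ (j - 1) * (a - b) :=
            rpow_concave_tangent hb0 hab hj1.le hj1'
          have h2 : b ^ j ≤ a ^ j := Real.rpow_le_rpow hb0.le hab hj1.le
          rw [abs_of_nonpos (by linarith), neg_sub]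
          have hab_r : a - b ≤ r := by
            rw [abs_sub_comm] at hlip; linarith [(abs_le.1 hlip).2]
          have hbj : b ^ (j - 1) ≤ 2 * a ^ (j - 1) := by
            have h3 : b ^ (j - 1) ≤ (a / 2) ^ (j - 1) :=
              Real.rpow_le_rpow_of_nonpos (by linarith) hb_half (by linarith)
            have h4 : (a / 2) ^ (j - 1) = a ^ (j - 1) / 2 ^ (j - 1) :=
              Real.div_rpow ha0.le (by norm_num : (0:ℝ) ≤ 2) (j - 1)
            have h5 : (1:ℝ) / 2 ≤ 2 ^ (j - 1) := by
              have : (2:ℝ) ^ (-1 : ℝ) ≤ 2 ^ (j - 1) :=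
                Real.rpow_le_rpow_of_exponent_le one_le_two (by linarith)
              rwa [Real.rpow_neg_one, show ((2:ℝ))⁻¹ = 1 / 2 by norm_num] at this
            have h6 : 0 < (2:ℝ) ^ (j - 1) := Real.rpow_pos_of_pos two_pos _
            have h7 : a ^ (j - 1) / 2 ^ (j - 1) ≤ a ^ (j - 1) / (1 / 2) :=
              div_le_div_of_nonneg_left haj1 (by norm_num) h5
            rw [h4] at h3
            calc b ^ (j - 1) ≤ a ^ (j - 1) / 2 ^ (j - 1) := h3
              _ ≤ a ^ (j - 1) / (1 / 2) := h7
              _ = 2 * a ^ (j - 1) := by ring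
          nlinarith
      have hnum : (b ^ j - a ^ j) ^ 2 ≤ 4 * a ^ (2 * j - 2) * r ^ 2 := by
        have h1 : (b ^ j - a ^ j) ^ 2 ≤ (2 * a ^ (j - 1) * r) ^ 2 := by
          have h2 := abs_le.1 key
          nlinarith [abs_nonneg (b ^ j - a ^ j), sq_abs (b ^ j - a ^ j)]
        have h3 : (a ^ (j - 1)) ^ 2 = a ^ (2 * j - 2) := by
          rw [← Real.rpow_natCast (a ^ (j - 1)) 2, ← Real.rpow_mul ha0.le]
          congr 1; push_cast; ring
        nlinarith [Real.rpow_nonneg ha0.le (j - 1), sq_nonneg r]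
      calc (b ^ j - a ^ j) ^ 2 / r ^ s ≤ (4 * a ^ (2 * j - 2) * r ^ 2) / r ^ s := by
            gcongr
        _ = 4 * a ^ (2 * j - 2) * r ^ (2 - s) := by
            rw [Real.rpow_sub hr, ← Real.rpow_two]
            ring
  · -- far region
    push_neg at hcase
    have hr : 0 < r := lt_trans (by linarith) hcase
    have hrs : 0 < r ^ s := Real.rpow_pos_of_pos hr s
    have hble : b ≤ a + r := by linarith [(abs_le.1 hlip).2]
    have hb2j : b ^ (2 * j) ≤ a ^ (2 * j) + r ^ (2 * j) := by
      calc b ^ (2 * j) ≤ (a + r) ^ (2 * j) :=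
            Real.rpow_le_rpow hb0.le hble (by linarith)
        _ ≤ a ^ (2 * j) + r ^ (2 * j) := rpow_subadd ha0.le hr0 (by linarith) (by linarith)
    have hsq : (b ^ j - a ^ j) ^ 2 ≤ 4 * a ^ (2 * j) + 2 * r ^ (2 * j) := by
      have e1 : (b ^ j) ^ 2 = b ^ (2 * j) := by
        rw [← Real.rpow_natCast (b ^ j) 2, ← Real.rpow_mul hb0.le]
        congr 1; push_cast; ring
      have e2 : (a ^ j) ^ 2 = a ^ (2 * j) := by
        rw [← Real.rpow_natCast (a ^ j) 2, ← Real.rpow_mul ha0.le]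
        congr 1; push_cast; ring
      nlinarith [sq_nonneg (b ^ j + a ^ j)]
    calc (b ^ j - a ^ j) ^ 2 / r ^ s ≤ (4 * a ^ (2 * j) + 2 * r ^ (2 * j)) / r ^ s :=
          by gcongr
      _ = 4 * a ^ (2 * j) * r ^ (-s) + 2 * r ^ (2 * j - s) := by
          rw [add_div, Real.rpow_sub hr, Real.rpow_neg hr.le]
          ring
local notation "dim" => Module.finrank ℝ

variable {E : Type*} [NormedAddCommGroup E] [NormedSpace ℝ E] [MeasurableSpace E]
  [Nontrivial E] (μ : Measure E) [FiniteDimensional ℝ E] [BorelSpace E] [μ.IsAddHaarMeasure]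

lemma my_lintegral_fun_norm_addHaar (f : ℝ → ℝ≥0∞) (hf : Measurable f) :
    ∫⁻ x, f ‖x‖ ∂μ =
      (dim E) * μ (ball 0 1) * ∫⁻ y in Ioi (0 : ℝ), ENNReal.ofReal (y ^ (dim E - 1)) * f y := by
  have hf2 : Measurable fun p : sphere (0 : E) 1 × Ioi (0:ℝ) => f p.2 :=
    hf.comp (measurable_subtype_coe.comp measurable_snd)
  calc
    ∫⁻ x, f ‖x‖ ∂μ = ∫⁻ x : ({(0)}ᶜ : Set E), f ‖x.1‖ ∂(μ.comap (↑)) := by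
      rw [lintegral_subtype_comap (measurableSet_singleton _).compl fun x ↦ f (‖x‖),
        restrict_compl_singleton]
    _ = ∫⁻ x : sphere (0 : E) 1 × Ioi (0 : ℝ), f x.2
        ∂μ.toSphere.prod (.volumeIoiPow (dim E - 1)) :=
      by rw [← μ.measurePreserving_homeomorphUnitSphereProd.lintegral_comp hf2]
         simp [homeomorphUnitSphereProd_apply_snd_coe]
    _ = μ.toSphere univ * ∫⁻ r : Ioi (0:ℝ), f r ∂(Measure.volumeIoiPow (dim E - 1)) := by
      rw [MeasureTheory.lintegral_prod _ hf2.aemeasurable]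
      simp [lintegral_const, mul_comm]
    _ = _ := by
      have h1 : (∫⁻ r : Ioi (0:ℝ), f r ∂(Measure.volumeIoiPow (dim E - 1)))
          = ∫⁻ y in Ioi (0:ℝ), ENNReal.ofReal (y ^ (dim E - 1)) * f y := by
        rw [Measure.volumeIoiPow,
          lintegral_withDensity_eq_lintegral_mul _
            (f := fun r : Ioi (0:ℝ) => ENNReal.ofReal (r.1 ^ (dim E - 1)))
            (by fun_prop) (g := fun r : Ioi (0:ℝ) => f r.1) (hf.comp measurable_subtype_coe),
          ← lintegral_subtype_comap measurableSet_Ioi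
            (fun y : ℝ => ENNReal.ofReal (y ^ (dim E - 1)) * f y)]
        rfl
      rw [h1, Measure.toSphere_apply_univ, mul_assoc]

lemma lint_Ioc {R p : ℝ} (hR : 0 < R) (hp : -1 < p) :
    ∫⁻ y in Ioc (0:ℝ) R, ENNReal.ofReal (y ^ p) = ENNReal.ofReal (R ^ (p + 1) / (p + 1)) := by
  have hint : IntegrableOn (fun y : ℝ => y ^ p) (Ioc 0 R) := by
    rw [← intervalIntegrable_iff_integrableOn_Ioc_of_le hR.le]
    exact intervalIntegral.intervalIntegrable_rpow' hp
  rw [← ofReal_integral_eq_lintegral_ofReal hint]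
  · congr 1
    rw [← intervalIntegral.integral_of_le hR.le, integral_rpow (Or.inl hp),
      Real.zero_rpow (by linarith), sub_zero]
  · filter_upwards [ae_restrict_mem measurableSet_Ioc] with y hy
    exact Real.rpow_nonneg hy.1.le p

lemma lint_Ioi {R p : ℝ} (hR : 0 < R) (hp : p < -1) :
    ∫⁻ y in Ioi R, ENNReal.ofReal (y ^ p) = ENNReal.ofReal (R ^ (p + 1) / (-(p + 1))) := by
  have hint : IntegrableOn (fun y : ℝ => y ^ p) (Ioi R) := integrableOn_Ioi_rpow_of_lt hp hR
  rw [← ofReal_integral_eq_lintegral_ofReal hint]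
  · congr 1
    rw [integral_Ioi_rpow_of_lt hp hR]
    rw [neg_div, div_neg]
  · filter_upwards [ae_restrict_mem measurableSet_Ioi] with y hy
    exact Real.rpow_nonneg (le_trans hR.le (le_of_lt hy)) p

section Main
variable {d : ℕ}

lemma half_rpow_le {a p : ℝ} (ha : 0 < a) (hp : -2 ≤ p) : (a / 2) ^ p ≤ 4 * a ^ p := by
  rw [Real.div_rpow ha.le (by norm_num : (0:ℝ) ≤ 2) p]
  have h1 : (2:ℝ) ^ (-2:ℝ) ≤ 2 ^ p := Real.rpow_le_rpow_of_exponent_le one_le_two hp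
  have h2 : (2:ℝ) ^ (-2:ℝ) = 1 / 4 := by
    rw [Real.rpow_neg (by norm_num : (0:ℝ) ≤ 2), Real.rpow_two]; norm_num
  rw [h2] at h1
  calc a ^ p / 2 ^ p ≤ a ^ p / (1 / 4) :=
        div_le_div_of_nonneg_left (Real.rpow_nonneg ha.le p) (by norm_num) h1
    _ = 4 * a ^ p := by ring

end Main

set_option maxHeartbeats 1000000 in
theorem stmt4 (d : ℕ) (hd : 0 < d) (α j : ℝ) (hα : 0 < α ∧ α < 2)
    (hj : 0 < 2 * j ∧ 2 * j < min α 1) :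
    ∃ C : ℝ, 0 < C ∧ ∀ x : EuclideanSpace ℝ (Fin d),
      ∫⁻ y : EuclideanSpace ℝ (Fin d),
          ENNReal.ofReal ((jb y ^ j - jb x ^ j) ^ 2 / ‖y - x‖ ^ ((d : ℝ) + α)) ≤
        ENNReal.ofReal (C * jb x ^ (2 * j - α)) := by
  obtain ⟨hα1, hα2⟩ := hα
  obtain ⟨hj0, hjm⟩ := hj
  have hj2 : 2 * j < α := lt_of_lt_of_le hjm (min_le_left _ _)
  have hj3 : 2 * j < 1 := lt_of_lt_of_le hjm (min_le_right _ _)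
  have hj1 : 0 < j := by linarith
  haveI : Nonempty (Fin d) := ⟨⟨0, hd⟩⟩
  set E := EuclideanSpace ℝ (Fin d) with hE
  haveI : Nontrivial E := inferInstance
  set V := volume (ball (0:E) 1) with hV
  have hVtop : ((d : ℝ≥0∞) * V) ≠ ∞ :=
    ENNReal.mul_ne_top (ENNReal.natCast_ne_top d) measure_ball_lt_top.ne
  set M := ((d : ℝ≥0∞) * V).toReal with hM
  have hM0 : 0 ≤ M := ENNReal.toReal_nonneg
  set C₀ := 16 / (2 - α) + 16 / α + 8 / (α - 2 * j) with hC₀def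
  have hC₀ : 0 < C₀ := by
    have p1 : 0 < 16 / (2 - α) := div_pos (by norm_num) (by linarith)
    have p2 : 0 < 16 / α := div_pos (by norm_num) hα1
    have p3 : 0 < 8 / (α - 2 * j) := div_pos (by norm_num) (by linarith)
    rw [hC₀def]; linarith
  refine ⟨M * C₀ + 1, by nlinarith, fun x => ?_⟩
  set a := jb x with ha_def
  have ha : 1 ≤ a := jb_one_le x
  have ha0 : 0 < a := by linarith
  have hR : 0 < a / 2 := by linarith
  set s : ℝ := (d : ℝ) + α with hs_def
  set ψ : ℝ → ℝ := fun r =>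
    if r ≤ a / 2 then 4 * a ^ (2 * j - 2) * r ^ (2 - s)
    else 4 * a ^ (2 * j) * r ^ (-s) + 2 * r ^ (2 * j - s) with hψ
  have hψmeas : Measurable fun r : ℝ => ENNReal.ofReal (ψ r) := by
    apply Measurable.ennreal_ofReal
    rw [hψ]
    exact Measurable.ite (measurableSet_le measurable_id measurable_const)
      (by fun_prop) (by fun_prop)
  have hdim : finrank ℝ E = d := finrank_euclideanSpace_fin
  have hA0 : 0 < a ^ (2 * j - α) := Real.rpow_pos_of_pos ha0 _
  have hd1 : 1 ≤ d := hd
  -- near piece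
  have near : ∫⁻ y in Ioc (0:ℝ) (a/2), ENNReal.ofReal (y ^ (d - 1)) * ENNReal.ofReal (ψ y)
      = ENNReal.ofReal (4 * a ^ (2 * j - 2)) * ENNReal.ofReal ((a/2) ^ (2 - α) / (2 - α)) := by
    have hcongr : ∀ y ∈ Ioc (0:ℝ) (a/2),
        ENNReal.ofReal (y ^ (d - 1)) * ENNReal.ofReal (ψ y)
          = ENNReal.ofReal (4 * a ^ (2 * j - 2)) * ENNReal.ofReal (y ^ (1 - α)) := by
      intro y hy
      have hy0 : 0 < y := hy.1
      rw [hψ]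
      simp only [if_pos hy.2]
      rw [← ENNReal.ofReal_mul (by positivity), ← ENNReal.ofReal_mul (by positivity)]
      congr 1
      have hyd : (y : ℝ) ^ (d - 1) = y ^ ((d:ℝ) - 1) := by
        rw [← Real.rpow_natCast y (d - 1), Nat.cast_sub hd1, Nat.cast_one]
      have hmul : y ^ ((d:ℝ) - 1) * y ^ (2 - s) = y ^ (1 - α) := by
        rw [← Real.rpow_add hy0]
        congr 1
        rw [hs_def]; ring
      calc y ^ (d - 1) * (4 * a ^ (2 * j - 2) * y ^ (2 - s))
          = 4 * a ^ (2 * j - 2) * (y ^ ((d:ℝ) - 1) * y ^ (2 - s)) := by rw [hyd]; ring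
        _ = 4 * a ^ (2 * j - 2) * y ^ (1 - α) := by rw [hmul]
    rw [setLIntegral_congr_fun measurableSet_Ioc hcongr,
      lintegral_const_mul' _ _ ENNReal.ofReal_ne_top, lint_Ioc hR (by linarith : (-1:ℝ) < 1 - α),
      show (1 - α) + 1 = 2 - α by ring]
  -- far piece
  have far : ∫⁻ y in Ioi (a/2), ENNReal.ofReal (y ^ (d - 1)) * ENNReal.ofReal (ψ y)
      = ENNReal.ofReal (4 * a ^ (2 * j)) * ENNReal.ofReal ((a/2) ^ (-α) / α)
        + ENNReal.ofReal 2 * ENNReal.ofReal ((a/2) ^ (2 * j - α) / (α - 2 * j)) := by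
    have hcongr : ∀ y ∈ Ioi (a/2),
        ENNReal.ofReal (y ^ (d - 1)) * ENNReal.ofReal (ψ y)
          = ENNReal.ofReal (4 * a ^ (2 * j)) * ENNReal.ofReal (y ^ (-1 - α))
            + ENNReal.ofReal 2 * ENNReal.ofReal (y ^ (2 * j - 1 - α)) := by
      intro y hy
      have hy' : a / 2 < y := hy
      have hy0 : 0 < y := lt_trans hR hy'
      rw [hψ]
      simp only [if_neg (not_le.2 hy')]
      rw [← ENNReal.ofReal_mul (by positivity)]
      have hyd : (y : ℝ) ^ (d - 1) = y ^ ((d:ℝ) - 1) := by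
        rw [← Real.rpow_natCast y (d - 1), Nat.cast_sub hd1, Nat.cast_one]
      have hmul1 : y ^ ((d:ℝ) - 1) * y ^ (-s) = y ^ (-1 - α) := by
        rw [← Real.rpow_add hy0]; congr 1; rw [hs_def]; ring
      have hmul2 : y ^ ((d:ℝ) - 1) * y ^ (2 * j - s) = y ^ (2 * j - 1 - α) := by
        rw [← Real.rpow_add hy0]; congr 1; rw [hs_def]; ring
      have hexp : y ^ (d - 1) * (4 * a ^ (2 * j) * y ^ (-s) + 2 * y ^ (2 * j - s))
          = 4 * a ^ (2 * j) * y ^ (-1 - α) + 2 * y ^ (2 * j - 1 - α) := by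
        rw [hyd, ← hmul1, ← hmul2]; ring
      rw [hexp, ENNReal.ofReal_add (by positivity) (by positivity),
        ENNReal.ofReal_mul (show (0:ℝ) ≤ 4 * a ^ (2 * j) by positivity),
        ENNReal.ofReal_mul (show (0:ℝ) ≤ 2 by norm_num)]
    rw [setLIntegral_congr_fun measurableSet_Ioi hcongr,
      lintegral_add_left (by fun_prop),
      lintegral_const_mul' _ _ ENNReal.ofReal_ne_top,
      lintegral_const_mul' _ _ ENNReal.ofReal_ne_top,
      lint_Ioi hR (by linarith : -1 - α < -1),
      lint_Ioi hR (by linarith : 2 * j - 1 - α < -1),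
      show (-1 - α) + 1 = -α by ring, show (2 * j - 1 - α) + 1 = 2 * j - α by ring,
      neg_neg, show -(2 * j - α) = α - 2 * j by ring]
  -- the real-number estimate
  have hn1 : (0:ℝ) ≤ (a/2) ^ (2 - α) / (2 - α) :=
    div_nonneg (Real.rpow_nonneg hR.le _) (by linarith)
  have hn2 : (0:ℝ) ≤ (a/2) ^ (-α) / α :=
    div_nonneg (Real.rpow_nonneg hR.le _) (by linarith)
  have hn3 : (0:ℝ) ≤ (a/2) ^ (2 * j - α) / (α - 2 * j) :=
    div_nonneg (Real.rpow_nonneg hR.le _) (by linarith)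
  have hm1 : a ^ (2*j-2) * a ^ (2-α) = a ^ (2*j-α) := by
    rw [← Real.rpow_add ha0]; congr 1; ring
  have hm2 : a ^ (2*j) * a ^ (-α) = a ^ (2*j-α) := by
    rw [← Real.rpow_add ha0]; congr 1 <;> ring
  have hb1 : (a/2) ^ (2-α) ≤ 4 * a ^ (2-α) := half_rpow_le ha0 (by linarith)
  have hb2 : (a/2) ^ (-α) ≤ 4 * a ^ (-α) := half_rpow_le ha0 (by linarith)
  have hb3 : (a/2) ^ (2*j-α) ≤ 4 * a ^ (2*j-α) := half_rpow_le ha0 (by linarith)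
  have t1 : 4 * a ^ (2*j-2) * ((a/2) ^ (2-α) / (2-α)) ≤ 16 / (2-α) * a ^ (2*j-α) := by
    have key := mul_le_mul_of_nonneg_left hb1 (show (0:ℝ) ≤ 4 * a ^ (2*j-2) / (2-α) from
      div_nonneg (by positivity) (by linarith))
    calc 4 * a ^ (2*j-2) * ((a/2) ^ (2-α) / (2-α))
        = 4 * a ^ (2*j-2) / (2-α) * (a/2) ^ (2-α) := by ring
      _ ≤ 4 * a ^ (2*j-2) / (2-α) * (4 * a ^ (2-α)) := key
      _ = 16 / (2-α) * (a ^ (2*j-2) * a ^ (2-α)) := by ring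
      _ = 16 / (2-α) * a ^ (2*j-α) := by rw [hm1]
  have t2 : 4 * a ^ (2*j) * ((a/2) ^ (-α) / α) ≤ 16 / α * a ^ (2*j-α) := by
    have key := mul_le_mul_of_nonneg_left hb2 (show (0:ℝ) ≤ 4 * a ^ (2*j) / α from
      div_nonneg (by positivity) (by linarith))
    calc 4 * a ^ (2*j) * ((a/2) ^ (-α) / α)
        = 4 * a ^ (2*j) / α * (a/2) ^ (-α) := by ring
      _ ≤ 4 * a ^ (2*j) / α * (4 * a ^ (-α)) := key
      _ = 16 / α * (a ^ (2*j) * a ^ (-α)) := by ring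
      _ = 16 / α * a ^ (2*j-α) := by rw [hm2]
  have t3 : 2 * ((a/2) ^ (2*j-α) / (α - 2*j)) ≤ 8 / (α - 2*j) * a ^ (2*j-α) := by
    have key := mul_le_mul_of_nonneg_left hb3 (show (0:ℝ) ≤ 2 / (α - 2*j) from
      div_nonneg (by norm_num) (by linarith))
    calc 2 * ((a/2) ^ (2*j-α) / (α - 2*j))
        = 2 / (α - 2*j) * (a/2) ^ (2*j-α) := by ring
      _ ≤ 2 / (α - 2*j) * (4 * a ^ (2*j-α)) := key
      _ = 8 / (α - 2*j) * a ^ (2*j-α) := by ring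
  have hSle : 4 * a ^ (2*j-2) * ((a/2) ^ (2-α) / (2-α))
      + (4 * a ^ (2*j) * ((a/2) ^ (-α) / α) + 2 * ((a/2) ^ (2*j-α) / (α - 2*j)))
      ≤ C₀ * a ^ (2*j-α) := by
    calc 4 * a ^ (2*j-2) * ((a/2) ^ (2-α) / (2-α))
        + (4 * a ^ (2*j) * ((a/2) ^ (-α) / α) + 2 * ((a/2) ^ (2*j-α) / (α - 2*j)))
        ≤ 16 / (2-α) * a ^ (2*j-α) + (16 / α * a ^ (2*j-α) + 8 / (α - 2*j) * a ^ (2*j-α)) := by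
          linarith
      _ = C₀ * a ^ (2*j-α) := by rw [hC₀def]; ring
  -- main chain
  have hpt : ∀ y : E, ENNReal.ofReal ((jb y ^ j - jb x ^ j) ^ 2 / ‖y - x‖ ^ ((d : ℝ) + α))
      ≤ ENNReal.ofReal (ψ ‖y - x‖) := by
    intro y
    apply ENNReal.ofReal_le_ofReal
    simp only [hψ, hs_def]
    exact pointwise_bound hα1 hα2 hj1 hj2 hj3 x y
  calc ∫⁻ y : E, ENNReal.ofReal ((jb y ^ j - jb x ^ j) ^ 2 / ‖y - x‖ ^ ((d : ℝ) + α))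
      ≤ ∫⁻ y : E, ENNReal.ofReal (ψ ‖y - x‖) := lintegral_mono hpt
    _ = ∫⁻ z : E, ENNReal.ofReal (ψ ‖z‖) :=
        lintegral_sub_right_eq_self (fun z => ENNReal.ofReal (ψ ‖z‖)) x
    _ = (finrank ℝ E : ℝ≥0∞) * V *
        ∫⁻ y in Ioi (0:ℝ), ENNReal.ofReal (y ^ (finrank ℝ E - 1)) * ENNReal.ofReal (ψ y) :=
        my_lintegral_fun_norm_addHaar volume _ hψmeas
    _ = (d : ℝ≥0∞) * V *
        ∫⁻ y in Ioi (0:ℝ), ENNReal.ofReal (y ^ (d - 1)) * ENNReal.ofReal (ψ y) := by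
        rw [hdim]
    _ = (d : ℝ≥0∞) * V *
        (ENNReal.ofReal (4 * a ^ (2 * j - 2)) * ENNReal.ofReal ((a/2) ^ (2 - α) / (2 - α)) +
          (ENNReal.ofReal (4 * a ^ (2 * j)) * ENNReal.ofReal ((a/2) ^ (-α) / α)
            + ENNReal.ofReal 2 * ENNReal.ofReal ((a/2) ^ (2 * j - α) / (α - 2 * j)))) := by
        rw [show Ioi (0:ℝ) = Ioc 0 (a/2) ∪ Ioi (a/2) from (Ioc_union_Ioi_eq_Ioi hR.le).symm,
          lintegral_union measurableSet_Ioi (Ioc_disjoint_Ioi le_rfl), near, far]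
    _ ≤ ENNReal.ofReal ((M * C₀ + 1) * a ^ (2 * j - α)) := by
        rw [← ENNReal.ofReal_mul (show (0:ℝ) ≤ 4 * a ^ (2 * j - 2) by positivity),
          ← ENNReal.ofReal_mul (show (0:ℝ) ≤ 4 * a ^ (2 * j) by positivity),
          ← ENNReal.ofReal_mul (show (0:ℝ) ≤ 2 by norm_num),
          ← ENNReal.ofReal_add (by positivity) (mul_nonneg (by norm_num) hn3),
          ← ENNReal.ofReal_add (mul_nonneg (by positivity) hn1)
            (add_nonneg (mul_nonneg (by positivity) hn2) (mul_nonneg (by norm_num) hn3)),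
          show (d : ℝ≥0∞) * V = ENNReal.ofReal M from (ENNReal.ofReal_toReal hVtop).symm,
          ← ENNReal.ofReal_mul hM0]
        apply ENNReal.ofReal_le_ofReal
        have h1 : M * (4 * a ^ (2*j-2) * ((a/2) ^ (2-α) / (2-α))
            + (4 * a ^ (2*j) * ((a/2) ^ (-α) / α) + 2 * ((a/2) ^ (2*j-α) / (α - 2*j))))
            ≤ M * (C₀ * a ^ (2*j-α)) := mul_le_mul_of_nonneg_left hSle hM0
        nlinarith [hA0.le]
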